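/- Let k be a natural number, u = 2^k, let ℓ be an integer with 1 ≤ ℓ ≤ u, and let S = [a, a+ℓ) × [b, b+ℓ) be an axis-aligned square with integer corner (a,b), contained in [0,u)². Let C be a finite nonempty set of integer points contained in S. Then the quadtree node count of C is at most |C| · ⌈log₂ ℓ⌉ + 4·(k+1). -/

import Mathlib

/-- The quadtree node count of a finite point set `P` on a `2^k × 2^k` grid:
the number of triples `(d, i, j)` with `d ≤ k` such that `(i, j)` is the
depth-`d` dyadic square containing some point of `P`. -/
def quadNodes (k : ℕ) (P : Finset (ℕ × ℕ)) : ℕ :=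
  ((Finset.range (k + 1)).biUnion fun d =>
    P.image fun p => (d, p.1 / 2 ^ (k - d), p.2 / 2 ^ (k - d))).card

lemma div_two_vals (s a ℓ x : ℕ) (hs : 0 < s) (hℓs : ℓ ≤ s) (h1 : a ≤ x)
    (h2 : x < a + ℓ) : x / s = a / s ∨ x / s = a / s + 1 := by
  have l := Nat.div_le_div_right (c := s) h1
  have r : x / s ≤ (a + s) / s := Nat.div_le_div_right (by omega)
  rw [Nat.add_div_right _ hs] at r
  omega

theorem quadtree_cluster_bound (k : ℕ) (u : ℕ) (hu : u = 2 ^ k)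
    (ℓ : ℕ) (hℓ1 : 1 ≤ ℓ) (hℓu : ℓ ≤ u)
    (a b : ℕ) (ha : a + ℓ ≤ u) (hb : b + ℓ ≤ u)
    (C : Finset (ℕ × ℕ)) (hC : C.Nonempty)
    (hsq : ∀ p ∈ C, a ≤ p.1 ∧ p.1 < a + ℓ ∧ b ≤ p.2 ∧ p.2 < b + ℓ) :
    quadNodes k C ≤ C.card * Nat.clog 2 ℓ + 4 * (k + 1) := by
  classical
  set m := Nat.clog 2 ℓ with hm
  have hℓm : ℓ ≤ 2 ^ m := Nat.le_pow_clog one_lt_two ℓ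
  have hmk : m ≤ k := by
    have h := Nat.clog_mono_right 2 hℓu
    rwa [hu, Nat.clog_pow 2 k one_lt_two] at h
  have hshallow : ∀ d, d + m ≤ k →
      (C.image fun p => (d, p.1 / 2 ^ (k - d), p.2 / 2 ^ (k - d))).card ≤ 4 := by
    intro d hd
    set s := 2 ^ (k - d) with hs
    have hs0 : 0 < s := Nat.pow_pos (by norm_num)
    have hls : ℓ ≤ s := hℓm.trans (Nat.pow_le_pow_right (by norm_num) (by omega))
    have hsub : (C.image fun p => (d, p.1 / s, p.2 / s)) ⊆
        ({(d, a / s, b / s), (d, a / s + 1, b / s),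
          (d, a / s, b / s + 1), (d, a / s + 1, b / s + 1)} : Finset (ℕ × ℕ × ℕ)) := by
      intro q hq
      simp only [Finset.mem_image] at hq
      obtain ⟨p, hp, rfl⟩ := hq
      obtain ⟨h1, h2, h3, h4⟩ := hsq p hp
      have hx := div_two_vals s a ℓ p.1 hs0 hls h1 h2
      have hy := div_two_vals s b ℓ p.2 hs0 hls h3 h4
      simp only [Finset.mem_insert, Finset.mem_singleton, Prod.mk.injEq]
      tauto
    refine (Finset.card_le_card hsub).trans ?_
    refine (Finset.card_insert_le _ _).trans ?_
    refine Nat.succ_le_succ ?_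
    refine (Finset.card_insert_le _ _).trans ?_
    refine Nat.succ_le_succ ?_
    refine (Finset.card_insert_le _ _).trans ?_
    simp
  unfold quadNodes
  refine le_trans Finset.card_biUnion_le ?_
  rw [Finset.range_eq_Ico,
    ← Finset.sum_Ico_consecutive _ (Nat.zero_le (k + 1 - m)) (by omega)]
  have h1 : ∑ d ∈ Finset.Ico 0 (k + 1 - m),
      (C.image fun p => (d, p.1 / 2 ^ (k - d), p.2 / 2 ^ (k - d))).card
      ≤ (k + 1 - m) * 4 := by
    have := Finset.sum_le_card_nsmul (Finset.Ico 0 (k + 1 - m))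
      (fun d => (C.image fun p => (d, p.1 / 2 ^ (k - d), p.2 / 2 ^ (k - d))).card) 4
      (fun d hd => by
        simp only [Finset.mem_Ico] at hd
        exact hshallow d (by omega))
    simpa [Nat.card_Ico] using this
  have h2 : ∑ d ∈ Finset.Ico (k + 1 - m) (k + 1),
      (C.image fun p => (d, p.1 / 2 ^ (k - d), p.2 / 2 ^ (k - d))).card
      ≤ m * C.card := by
    have := Finset.sum_le_card_nsmul (Finset.Ico (k + 1 - m) (k + 1))
      (fun d => (C.image fun p => (d, p.1 / 2 ^ (k - d), p.2 / 2 ^ (k - d))).card) C.card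
      (fun d _ => Finset.card_image_le)
    rw [Nat.card_Ico] at this
    have he : k + 1 - (k + 1 - m) = m := by omega
    rw [he] at this
    simpa using this
  refine le_trans (add_le_add h1 h2) ?_
  have : m * C.card = C.card * m := mul_comm _ _
  linarith [Nat.sub_le (k + 1) m, Nat.mul_le_mul_right 4 (Nat.sub_le (k + 1) m)]
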